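/- Let V be a finite-dimensional vector space over ℚ with a basis b : ι → V indexed by a finite type ι, and let w₊, w₋ : V →ₗ[ℚ] V be linear endomorphisms. Set I := {i ∈ ι | w₊ (b i) = b i ∧ w₋ (b i) = b i}, and for J ⊆ ι let L_J denote the ℤ-submodule of V generated by {b i : i ∈ J}. Then: (1) the subgroup ker(w₊ − w₋) ∩ L_ι is the internal direct sum of L_I and the subgroup L̃_red := {μ ∈ L_{ι∖I} | w₊ μ = w₋ μ}; and (2) L̃_red is a free abelian group of rank equal to finrank_ℚ (ker (w₊ − w₋)) − |I|. -/

import Mathlib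

section Aux

variable {V : Type*} [AddCommGroup V] [Module ℚ V]
  {ι : Type*} [Fintype ι]

/-- Any `ℤ`-submodule of a `ℚ`-vector space contained in the `ℤ`-span of a `ℚ`-basis is
finite and free as a `ℤ`-module. -/
private lemma aux_finite_free (b : Module.Basis ι ℚ V) (N : Submodule ℤ V)
    (hN : N ≤ Submodule.span ℤ (Set.range b)) :
    Module.Finite ℤ N ∧ Module.Free ℤ N := by
  set L := Submodule.span ℤ (Set.range b) with hL
  haveI : Module.Finite ℤ L := Module.Finite.span_of_finite ℤ (Set.finite_range b)
  haveI : IsNoetherian ℤ L := isNoetherian_of_isNoetherianRing_of_finite ℤ L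
  haveI : Module.Finite ℤ (Submodule.comap L.subtype N) :=
    Module.Finite.iff_fg.mpr (IsNoetherian.noetherian _)
  haveI hfin : Module.Finite ℤ N :=
    Module.Finite.equiv (Submodule.comapSubtypeEquivOfLe hN)
  haveI : IsAddTorsionFree V := IsAddTorsionFree.of_isTorsionFree ℚ V
  exact ⟨hfin, Module.free_of_finite_type_torsion_free'⟩

end Aux

/-- Let `V` be a finite-dimensional `ℚ`-vector space with basis `b : ι → V`, `ι` finite, and let
`w₊, w₋ : V →ₗ[ℚ] V`.  Let `I = {i | w₊ (b i) = b i ∧ w₋ (b i) = b i}` and, for `J ⊆ ι`, let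
`L_J` be the `ℤ`-submodule generated by `{b i : i ∈ J}`.  Then `ker (w₊ - w₋) ∩ L_ι` is the
internal direct sum of `L_I` and `L̃_red = {μ ∈ L_{ι∖I} | w₊ μ = w₋ μ}`, and `L̃_red` is a free
abelian group of rank `finrank ℚ (ker (w₊ - w₋)) - |I|`. -/
theorem ker_inter_lattice_direct_sum_and_rank {V : Type*} [AddCommGroup V] [Module ℚ V]
    [FiniteDimensional ℚ V] {ι : Type*} [Fintype ι] (b : Module.Basis ι ℚ V)
    (wp wm : V →ₗ[ℚ] V)
    (I : Set ι) (hI : I = {i | wp (b i) = b i ∧ wm (b i) = b i})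
    (Lred : Submodule ℤ V)
    (hLred : Lred = Submodule.span ℤ (b '' Iᶜ) ⊓
      (LinearMap.ker (wp - wm)).restrictScalars ℤ) :
    (Submodule.span ℤ (b '' I) ⊓ Lred = ⊥ ∧
      Submodule.span ℤ (b '' I) ⊔ Lred =
        (LinearMap.ker (wp - wm)).restrictScalars ℤ ⊓ Submodule.span ℤ (Set.range b)) ∧
    Module.Free ℤ Lred ∧
    Module.finrank ℤ Lred = Module.finrank ℚ (LinearMap.ker (wp - wm)) - I.ncard := by
  classical
  set A := Submodule.span ℤ (b '' I) with hA
  set B := Submodule.span ℤ (b '' Iᶜ) with hB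
  set L := Submodule.span ℤ (Set.range b) with hL
  set Kz := (LinearMap.ker (wp - wm)).restrictScalars ℤ with hKz
  -- b is ℤ-linearly independent
  have hbz : LinearIndependent ℤ b :=
    (LinearIndependent.iff_fractionRing ℤ ℚ).mpr b.linearIndependent
  -- membership in the kernel
  have hmemK : ∀ x : V, x ∈ Kz ↔ wp x = wm x := by
    intro x
    simp [hKz, LinearMap.mem_ker, sub_eq_zero]
  -- A ≤ Kz
  have hAK : A ≤ Kz := by
    rw [hA, Submodule.span_le]
    rintro _ ⟨i, hi, rfl⟩
    rw [hI] at hi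
    rw [SetLike.mem_coe, hmemK, hi.1, hi.2]
  -- A ≤ L, B ≤ L
  have hAL : A ≤ L := Submodule.span_mono (Set.image_subset_range _ _)
  have hBL : B ≤ L := Submodule.span_mono (Set.image_subset_range _ _)
  have hLredB : Lred ≤ B := hLred ▸ inf_le_left
  have hLredK : Lred ≤ Kz := hLred ▸ inf_le_right
  -- Part 1a : A ⊓ Lred = ⊥
  have hdisj : A ⊓ Lred = ⊥ := by
    have h1 : Disjoint A B := hbz.disjoint_span_image disjoint_compl_right
    have : A ⊓ Lred ≤ A ⊓ B := inf_le_inf_left _ hLredB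
    rw [← le_bot_iff]
    exact le_trans this (disjoint_iff.mp h1).le
  -- L = A ⊔ B
  have hLAB : A ⊔ B = L := by
    rw [hA, hB, hL, ← Submodule.span_union, ← Set.image_union, Set.union_compl_self,
      Set.image_univ]
  -- Part 1b : A ⊔ Lred = Kz ⊓ L
  have hsup : A ⊔ Lred = Kz ⊓ L := by
    apply le_antisymm
    · exact sup_le (le_inf hAK hAL) (le_inf hLredK (le_trans hLredB hBL))
    · rintro x ⟨hxK, hxL⟩
      rw [← hLAB] at hxL
      obtain ⟨a, ha, c, hc, rfl⟩ := Submodule.mem_sup.mp hxL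
      have hcK : c ∈ Kz := by
        have : a ∈ Kz := hAK ha
        have := Kz.sub_mem hxK this
        simpa using this
      refine Submodule.mem_sup.mpr ⟨a, ha, c, ?_, rfl⟩
      rw [hLred]
      exact ⟨hc, hcK⟩
  -- Finiteness / freeness of the relevant lattices
  obtain ⟨hAfin, hAfree⟩ := aux_finite_free b A hAL
  obtain ⟨hLredfin, hLredfree⟩ := aux_finite_free b Lred (le_trans hLredB hBL)
  obtain ⟨hMfin, hMfree⟩ := aux_finite_free b (Kz ⊓ L) inf_le_right
  refine ⟨⟨hdisj, hsup⟩, hLredfree, ?_⟩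
  -- rank of A is |I|
  haveI : Fintype I := I.toFinite.fintype
  have hArank : Module.finrank ℤ A = I.ncard := by
    have hli : LinearIndependent ℤ (fun i : I => b i) :=
      hbz.comp Subtype.val Subtype.val_injective
    have hr : Set.range (fun i : I => b i) = b '' I := by
      rw [← Set.image_eq_range]
    have := finrank_span_eq_card hli
    rw [hr] at this
    rw [hA, this, ← Nat.card_coe_set_eq, Nat.card_eq_fintype_card]
  -- rank of Kz ⊓ L equals finrank ℚ of the kernel
  set M := Kz ⊓ L with hM
  haveI := hMfin; haveI := hMfree
  set η := Module.Free.ChooseBasisIndex ℤ M with hη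
  set c : Module.Basis η ℤ M := Module.Free.chooseBasis ℤ M with hc
  set v : η → V := fun j => (c j : V) with hv
  have hvz : LinearIndependent ℤ v :=
    c.linearIndependent.map' M.subtype (Submodule.ker_subtype M)
  have hvq : LinearIndependent ℚ v := (LinearIndependent.iff_fractionRing ℤ ℚ).mp hvz
  -- span ℤ (range v) = M
  have hspanZ : Submodule.span ℤ (Set.range v) = M := by
    have : Submodule.map M.subtype (Submodule.span ℤ (Set.range c)) = M := by
      rw [c.span_eq, Submodule.map_top, Submodule.range_subtype]
    rw [← this, Submodule.map_span, ← Set.range_comp]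
    rfl
  -- span ℚ (range v) = ker (wp - wm)
  have hspanQ : Submodule.span ℚ (Set.range v) = LinearMap.ker (wp - wm) := by
    apply le_antisymm
    · rw [Submodule.span_le]
      rintro _ ⟨j, rfl⟩
      exact (c j).2.1
    · intro x hx
      -- clear denominators
      obtain ⟨d, hd⟩ := IsLocalization.exist_integer_multiples (nonZeroDivisors ℤ)
        Finset.univ (fun i => b.repr x i)
      have hdx : (d : ℤ) • x ∈ L := by
        set q := b.repr x with hq
        have hx' : x = ∑ i, q i • b i := (b.sum_repr x).symm
        rw [hL, hx', Finset.smul_sum]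
        refine Submodule.sum_mem _ fun i _ => ?_
        rw [← smul_assoc]
        obtain ⟨z, hz⟩ := hd i (Finset.mem_univ i)
        rw [← hz]
        have hzz : (algebraMap ℤ ℚ z : ℚ) • b i = z • b i := by
          simp [Int.cast_smul_eq_zsmul]
        rw [hzz]
        exact Submodule.smul_mem _ _ (Submodule.subset_span ⟨i, rfl⟩)
      have hdxK : (d : ℤ) • x ∈ Kz := Submodule.smul_mem _ _ hx
      have hdxM : (d : ℤ) • x ∈ M := ⟨hdxK, hdx⟩
      have hdxspan : (d : ℤ) • x ∈ Submodule.span ℚ (Set.range v) := by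
        have h1 : (M : Set V) ⊆ (Submodule.span ℚ (Set.range v) : Set V) := by
          intro m hm
          rw [← hspanZ] at hm
          exact Submodule.span_le_restrictScalars ℤ ℚ (Set.range v) hm
        exact h1 hdxM
      have hd0 : ((d : ℤ) : ℚ) ≠ 0 := by
        exact_mod_cast nonZeroDivisors.coe_ne_zero d
      have : x = ((d : ℤ) : ℚ)⁻¹ • ((d : ℤ) • x) := by
        rw [← Int.cast_smul_eq_zsmul ℚ, smul_smul, inv_mul_cancel₀ hd0, one_smul]
      rw [this]
      exact Submodule.smul_mem _ _ hdxspan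
  have hMrank : Module.finrank ℤ M = Module.finrank ℚ (LinearMap.ker (wp - wm)) := by
    rw [← hspanQ, finrank_span_eq_card hvq, Module.finrank_eq_card_basis c]
  -- direct sum rank count
  have hprodrank : Module.finrank ℤ M = Module.finrank ℤ A + Module.finrank ℤ Lred := by
    haveI := hAfin; haveI := hAfree; haveI := hLredfin; haveI := hLredfree
    set f : (A × Lred) →ₗ[ℤ] V := A.subtype.coprod Lred.subtype with hf
    have hinj : Function.Injective f := by
      rw [← LinearMap.ker_eq_bot, LinearMap.ker_eq_bot']
      rintro ⟨a, u⟩ h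
      have h' : (a : V) + (u : V) = 0 := h
      have ha0 : (a : V) ∈ A ⊓ Lred := by
        refine ⟨a.2, ?_⟩
        have : (a : V) = -(u : V) := eq_neg_of_add_eq_zero_left h'
        rw [this]
        exact Lred.neg_mem u.2
      rw [hdisj] at ha0
      have ha0' : (a : V) = 0 := ha0
      have hu0 : (u : V) = 0 := by
        rw [ha0', zero_add] at h'
        exact h'
      exact Prod.ext (Subtype.ext ha0') (Subtype.ext hu0)
    have hrange : LinearMap.range f = A ⊔ Lred := by
      rw [hf, LinearMap.range_coprod, Submodule.range_subtype, Submodule.range_subtype]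
    have heq := (LinearEquiv.ofInjective f hinj).finrank_eq
    rw [hrange, hsup] at heq
    rw [← heq, Module.finrank_prod]
  rw [hprodrank, hArank] at hMrank
  omega
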